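/- Let p(z) = a_d z^d + ... + a_0 ∈ ℤ[z] with d ≥ 2 and a_d > 0. For all sufficiently large n there is a 2-colouring of [n] = {1, ..., n} with at most O(n^{2/d²}) monochromatic solutions {x, y, z} to x + y = p(z). Specifically: let n₂ be minimal with p(n₂) > 2n and n₁ minimal with p(n₁) > 2(n₂ - 1); colour [1, n₁-1] ∪ [n₂, n] with colour 1 and [n₁, n₂-1] with colour -1. Then every monochromatic solution satisfies z ≤ n₁ - 1 and min{x, y} ≤ n₁ - 1, so the number of monochromatic solutions is at most 2n₁². -/

import Mathlib

open Polynomial Filter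

lemma poly_eventually_mono (p : Polynomial ℤ) (hd : 2 ≤ p.natDegree)
    (hlead : 0 < p.leadingCoeff) :
    ∃ M : ℕ, ∀ a b : ℤ, (M : ℤ) ≤ a → a ≤ b → p.eval a ≤ p.eval b := by
  set P : Polynomial ℝ := p.map (Int.castRingHom ℝ) with hP
  have hinj : Function.Injective (Int.castRingHom ℝ) := Int.cast_injective
  have hPdeg : P.natDegree = p.natDegree := natDegree_map_eq_of_injective hinj p
  have hPlead : P.leadingCoeff = (p.leadingCoeff : ℝ) := by
    rw [hP, leadingCoeff_map_of_injective hinj]; rfl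
  set d := p.natDegree with hdd
  have hPc : P.coeff d = (p.leadingCoeff : ℝ) := by rw [hP, coeff_map]; rfl
  have hPcpos : (0:ℝ) < P.coeff d := by rw [hPc]; exact_mod_cast hlead
  set Q : Polynomial ℝ := P.derivative with hQ
  have hQc : Q.coeff (d - 1) = P.coeff d * d := by
    rw [hQ, coeff_derivative]
    have h1 : d - 1 + 1 = d := by omega
    rw [h1, Nat.cast_sub (show 1 ≤ d by omega), Nat.cast_one]
    ring
  have hQcpos : 0 < Q.coeff (d - 1) := by
    rw [hQc]
    have hd0 : (0:ℝ) < (d:ℝ) := by exact_mod_cast (show 0 < d by omega)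
    positivity
  have hQdeg : Q.natDegree = d - 1 := by
    refine le_antisymm ?_ (le_natDegree_of_ne_zero hQcpos.ne')
    calc Q.natDegree ≤ P.natDegree - 1 := natDegree_derivative_le P
      _ = d - 1 := by rw [hPdeg]
  have hQne : Q ≠ 0 := fun h => by simp [h] at hQcpos
  have hQdegpos : 0 < Q.degree := by
    rw [Polynomial.degree_eq_natDegree hQne, hQdeg]
    exact_mod_cast Nat.lt_of_lt_of_le Nat.zero_lt_one (by omega)
  have hQlead : 0 ≤ Q.leadingCoeff := by
    rw [leadingCoeff, hQdeg]; exact hQcpos.le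
  have htend : Tendsto (fun x => Q.eval x) atTop atTop :=
    Q.tendsto_atTop_of_leadingCoeff_nonneg hQdegpos hQlead
  obtain ⟨M, hM⟩ := (htend.eventually (eventually_ge_atTop (1:ℝ))).exists_forall_of_atTop
  have hmono : StrictMonoOn (fun x => P.eval x) (Set.Ici M) := by
    apply strictMonoOn_of_deriv_pos (convex_Ici M)
    · exact (P.continuous_aeval).continuousOn
    · intro x hx
      rw [Polynomial.deriv]
      rw [interior_Ici] at hx
      exact lt_of_lt_of_le one_pos (hM x hx.le)
  refine ⟨⌈M⌉₊, fun a b ha hab => ?_⟩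
  have ha' : M ≤ (a:ℝ) := le_trans (Nat.le_ceil M) (by exact_mod_cast ha)
  have hb' : M ≤ (b:ℝ) := le_trans ha' (by exact_mod_cast hab)
  have := hmono.monotoneOn ha' hb' (by exact_mod_cast hab)
  have h1 : P.eval (a:ℝ) = ((p.eval a : ℤ) : ℝ) := by rw [hP, eval_intCast_map]; rfl
  have h2 : P.eval (b:ℝ) = ((p.eval b : ℤ) : ℝ) := by rw [hP, eval_intCast_map]; rfl
  rw [h1, h2] at this
  exact_mod_cast this

theorem few_monochromatic_solutions_colouring (p : Polynomial ℤ) (hd : 2 ≤ p.natDegree)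
    (hlead : 0 < p.leadingCoeff) :
    ∃ N : ℕ, ∀ n : ℕ, N ≤ n → ∀ n₁ n₂ : ℕ,
      (0 < n₂ ∧ 2 * (n : ℤ) < p.eval (n₂ : ℤ) ∧
        (∀ k : ℕ, 0 < k → k < n₂ → p.eval (k : ℤ) ≤ 2 * (n : ℤ))) →
      (0 < n₁ ∧ 2 * ((n₂ : ℤ) - 1) < p.eval (n₁ : ℤ) ∧
        (∀ k : ℕ, 0 < k → k < n₁ → p.eval (k : ℤ) ≤ 2 * ((n₂ : ℤ) - 1))) →
      ((∀ x y z : ℕ, x ∈ Finset.Icc 1 n → y ∈ Finset.Icc 1 n → z ∈ Finset.Icc 1 n →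
          (x : ℤ) + (y : ℤ) = p.eval (z : ℤ) →
          ((x < n₁ ∨ n₂ ≤ x) ↔ (y < n₁ ∨ n₂ ≤ y)) →
          ((y < n₁ ∨ n₂ ≤ y) ↔ (z < n₁ ∨ n₂ ≤ z)) →
          z < n₁ ∧ min x y < n₁) ∧
        ((Finset.Icc 1 n ×ˢ Finset.Icc 1 n ×ˢ Finset.Icc 1 n).filter
            (fun t => (t.1 : ℤ) + (t.2.1 : ℤ) = p.eval (t.2.2 : ℤ) ∧
              ((t.1 < n₁ ∨ n₂ ≤ t.1) ↔ (t.2.1 < n₁ ∨ n₂ ≤ t.2.1)) ∧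
              ((t.2.1 < n₁ ∨ n₂ ≤ t.2.1) ↔ (t.2.2 < n₁ ∨ n₂ ≤ t.2.2)))).card
          ≤ 2 * n₁ ^ 2) := by
  classical
  obtain ⟨M, hM⟩ := poly_eventually_mono p hd hlead
  have hB : ∀ m k : ℕ, k ≤ m →
      p.eval (k:ℤ) ≤ (((Finset.range (m+1)).sup fun j => (p.eval (j:ℤ)).toNat : ℕ) : ℤ) := by
    intro m k hk
    calc p.eval (k:ℤ) ≤ ((p.eval (k:ℤ)).toNat : ℤ) := Int.self_le_toNat _
      _ ≤ _ := by
        exact_mod_cast Finset.le_sup (f := fun j : ℕ => (p.eval (j:ℤ)).toNat)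
          (Finset.mem_range.mpr (by omega))
  set B₁ : ℕ := (Finset.range (M+1)).sup fun j => (p.eval (j:ℤ)).toNat with hB₁
  set M₂ : ℕ := max M B₁ with hM₂
  set B₂ : ℕ := (Finset.range (M₂+1)).sup fun j => (p.eval (j:ℤ)).toNat with hB₂
  refine ⟨B₂, fun n hn n₁ n₂ h₂ h₁ => ?_⟩
  obtain ⟨hn₂pos, hn₂big, hn₂min⟩ := h₂
  obtain ⟨hn₁pos, hn₁big, hn₁min⟩ := h₁
  -- n₂ > M₂
  have hn₂M : M₂ < n₂ := by
    by_contra h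
    push_neg at h
    have h1 : p.eval (n₂:ℤ) ≤ (B₂:ℤ) := hB M₂ n₂ h
    have h2 : (B₂:ℤ) ≤ (n:ℤ) := by exact_mod_cast hn
    have h3 : (0:ℤ) ≤ n := Int.natCast_nonneg n
    linarith
  -- n₁ > M
  have hn₁M : M < n₁ := by
    by_contra h
    push_neg at h
    have h1 : p.eval (n₁:ℤ) ≤ (B₁:ℤ) := hB M n₁ h
    have h2 : (B₁:ℤ) ≤ (M₂:ℤ) := by exact_mod_cast le_max_right M B₁
    have h4 : (M₂:ℤ) ≤ (n₂:ℤ) - 1 := by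
      have : (M₂:ℤ) + 1 ≤ n₂ := by exact_mod_cast hn₂M
      linarith
    have h5 : (0:ℤ) ≤ M₂ := Int.natCast_nonneg M₂
    linarith
  have hMn₁ : (M:ℤ) ≤ (n₁:ℤ) := by exact_mod_cast hn₁M.le
  have hMn₂ : (M:ℤ) ≤ (n₂:ℤ) := by
    have : M ≤ M₂ := le_max_left M B₁
    exact_mod_cast (by omega : M ≤ n₂)
  have key : ∀ x y z : ℕ, x ∈ Finset.Icc 1 n → y ∈ Finset.Icc 1 n → z ∈ Finset.Icc 1 n →
      (x : ℤ) + (y : ℤ) = p.eval (z : ℤ) →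
      ((x < n₁ ∨ n₂ ≤ x) ↔ (y < n₁ ∨ n₂ ≤ y)) →
      ((y < n₁ ∨ n₂ ≤ y) ↔ (z < n₁ ∨ n₂ ≤ z)) →
      z < n₁ ∧ min x y < n₁ := by
    intro x y z hx hy hz heq hxy hyz
    rw [Finset.mem_Icc] at hx hy hz
    have hxn : (x:ℤ) ≤ n := by exact_mod_cast hx.2
    have hyn : (y:ℤ) ≤ n := by exact_mod_cast hy.2
    have hzlt : z < n₁ := by
      by_cases hcz : z < n₁ ∨ n₂ ≤ z
      · rcases hcz with h | h
        · exact h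
        · exfalso
          have hzz : (n₂:ℤ) ≤ (z:ℤ) := by exact_mod_cast h
          have := hM (n₂:ℤ) (z:ℤ) hMn₂ hzz
          linarith
      · exfalso
        have hcy : ¬ (y < n₁ ∨ n₂ ≤ y) := fun h => hcz (hyz.mp h)
        have hcx : ¬ (x < n₁ ∨ n₂ ≤ x) := fun h => hcy (hxy.mp h)
        push_neg at hcz hcy hcx
        have hxle : (x:ℤ) ≤ (n₂:ℤ) - 1 := by
          have : (x:ℤ) + 1 ≤ n₂ := by exact_mod_cast hcx.2
          linarith
        have hyle : (y:ℤ) ≤ (n₂:ℤ) - 1 := by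
          have : (y:ℤ) + 1 ≤ n₂ := by exact_mod_cast hcy.2
          linarith
        have hzz : (n₁:ℤ) ≤ (z:ℤ) := by exact_mod_cast hcz.1
        have := hM (n₁:ℤ) (z:ℤ) hMn₁ hzz
        linarith
    refine ⟨hzlt, ?_⟩
    by_contra h
    push_neg at h
    rw [le_min_iff] at h
    have hcx : x < n₁ ∨ n₂ ≤ x := hxy.mpr (hyz.mpr (Or.inl hzlt))
    have hcy : y < n₁ ∨ n₂ ≤ y := hyz.mpr (Or.inl hzlt)
    have hx₂ : n₂ ≤ x := by rcases hcx with h' | h' <;> omega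
    have hy₂ : n₂ ≤ y := by rcases hcy with h' | h' <;> omega
    have hpz : p.eval (z:ℤ) ≤ 2 * ((n₂:ℤ) - 1) := hn₁min z hz.1 hzlt
    have h1 : (n₂:ℤ) ≤ (x:ℤ) := by exact_mod_cast hx₂
    have h2 : (n₂:ℤ) ≤ (y:ℤ) := by exact_mod_cast hy₂
    have h3 : (1:ℤ) ≤ (n₂:ℤ) := by exact_mod_cast hn₂pos
    linarith
  refine ⟨key, ?_⟩
  set S := (Finset.Icc 1 n ×ˢ Finset.Icc 1 n ×ˢ Finset.Icc 1 n).filter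
      (fun t : ℕ × ℕ × ℕ => (t.1 : ℤ) + (t.2.1 : ℤ) = p.eval (t.2.2 : ℤ) ∧
        ((t.1 < n₁ ∨ n₂ ≤ t.1) ↔ (t.2.1 < n₁ ∨ n₂ ≤ t.2.1)) ∧
        ((t.2.1 < n₁ ∨ n₂ ≤ t.2.1) ↔ (t.2.2 < n₁ ∨ n₂ ≤ t.2.2))) with hS
  have hprops : ∀ t ∈ S, (t.1 : ℤ) + (t.2.1 : ℤ) = p.eval (t.2.2 : ℤ) ∧
      t.2.2 < n₁ ∧ min t.1 t.2.1 < n₁ := by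
    intro t ht
    rw [hS, Finset.mem_filter] at ht
    obtain ⟨hmem, heq, hxy, hyz⟩ := ht
    rw [Finset.mem_product] at hmem
    obtain ⟨hx, hmem'⟩ := hmem
    rw [Finset.mem_product] at hmem'
    obtain ⟨hy, hz⟩ := hmem'
    exact ⟨heq, key t.1 t.2.1 t.2.2 hx hy hz heq hxy hyz⟩
  calc S.card ≤ (Finset.range 2 ×ˢ Finset.range n₁ ×ˢ Finset.range n₁).card := by
        apply Finset.card_le_card_of_injOn
          (fun t => (if t.1 < n₁ then 0 else 1, if t.1 < n₁ then t.1 else t.2.1, t.2.2))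
        · intro t ht
          obtain ⟨heq, hzlt, hmin⟩ := hprops t ht
          rw [min_lt_iff] at hmin
          simp only [Finset.coe_product, Set.mem_prod, Finset.mem_coe, Finset.mem_product, Finset.mem_range]
          refine ⟨by split <;> omega, ?_, hzlt⟩
          split
          · assumption
          · rcases hmin with h | h
            · omega
            · exact h
        · intro t ht t' ht' hft
          obtain ⟨heq, hzlt, hmin⟩ := hprops t ht
          obtain ⟨heq', hzlt', hmin'⟩ := hprops t' ht'
          simp only [Prod.mk.injEq] at hft
          obtain ⟨h0, h1, h2⟩ := hft
          by_cases hc : t.1 < n₁ <;> by_cases hc' : t'.1 < n₁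
          · rw [if_pos hc, if_pos hc'] at h1
            rw [h2] at heq
            have : (t.2.1 : ℤ) = (t'.2.1 : ℤ) := by rw [h1] at heq; linarith
            have hy : t.2.1 = t'.2.1 := by exact_mod_cast this
            exact Prod.ext h1 (Prod.ext hy h2)
          · rw [if_pos hc, if_neg hc'] at h0; simp at h0
          · rw [if_neg hc, if_pos hc'] at h0; simp at h0
          · rw [if_neg hc, if_neg hc'] at h1
            rw [h2] at heq
            have : (t.1 : ℤ) = (t'.1 : ℤ) := by rw [h1] at heq; linarith
            have hx : t.1 = t'.1 := by exact_mod_cast this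
            exact Prod.ext hx (Prod.ext h1 h2)
    _ = 2 * n₁ ^ 2 := by
        simp [Finset.card_product]
        ring
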